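/- Let P be an orthogonal projection on a finite-dimensional Hilbert space H, and (E_k)_{k=1}^m operators with P E_k† E_{k'} P = λ_k δ_{kk'} P, λ_k > 0 for all k. Define R_k = P E_k† / √λ_k. Then for any vector ψ in the range of P, Σ_k R_k E_k |ψ⟩⟨ψ| E_k† R_k† = (Σ_k λ_k) |ψ⟩⟨ψ|, i.e., the recovery map R(σ) = Σ_k R_k σ R_k† satisfies R(ε(|ψ⟩⟨ψ|)) ∝ |ψ⟩⟨ψ| where ε(ρ) = Σ_k E_k ρ E_k†. -/

import Mathlib

open scoped InnerProductSpace BigOperators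

/-- The rank-one operator |ψ⟩⟨ψ|. -/
noncomputable def outer {H : Type*} [NormedAddCommGroup H] [InnerProductSpace ℂ H]
    (ψ : H) : H →ₗ[ℂ] H :=
  ((innerSL ℂ ψ).toLinearMap).smulRight ψ

theorem recovery_map_restores
    {H : Type*} [NormedAddCommGroup H] [InnerProductSpace ℂ H]
    [FiniteDimensional ℂ H] {m : ℕ}
    (K : Submodule ℂ H)
    (P : H →ₗ[ℂ] H)
    (hP : P = ((K.subtypeL.comp (K.orthogonalProjection) : H →L[ℂ] H) : H →ₗ[ℂ] H))
    (E : Fin m → (H →ₗ[ℂ] H)) (lam : Fin m → ℝ) (hlam : ∀ k, 0 < lam k)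
    (hKL : ∀ k k', P ∘ₗ LinearMap.adjoint (E k) ∘ₗ E k' ∘ₗ P
      = if k = k' then (lam k : ℂ) • P else 0)
    (ψ : H) (hψ : ψ ∈ K) (hψn : ‖ψ‖ = 1)
    (R : Fin m → (H →ₗ[ℂ] H))
    (hR : ∀ k, R k = ((Real.sqrt (lam k) : ℂ))⁻¹ • (P ∘ₗ LinearMap.adjoint (E k))) :
    (∑ k, R k ∘ₗ E k ∘ₗ outer ψ ∘ₗ LinearMap.adjoint (E k) ∘ₗ LinearMap.adjoint (R k)
        = ((∑ k, lam k : ℝ) : ℂ) • outer ψ) ∧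
    (∑ k, ∑ k', R k ∘ₗ E k' ∘ₗ outer ψ ∘ₗ LinearMap.adjoint (E k') ∘ₗ LinearMap.adjoint (R k)
        = ((∑ k, lam k : ℝ) : ℂ) • outer ψ) := by
  have hPψ : P ψ = ψ := by
    rw [hP]
    simp [Submodule.starProjection_eq_self_iff.mpr hψ]
  have hinner : ∀ x, (inner ℂ ψ (P x) : ℂ) = inner ℂ ψ x := by
    intro x
    rw [hP]
    calc (inner ℂ ψ ((K.subtypeL.comp (K.orthogonalProjection)) x) : ℂ)
        = inner ℂ (K.subtypeL (K.orthogonalProjection ψ)) x := by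
          simpa using (Submodule.inner_starProjection_left_eq_right K ψ x).symm
      _ = inner ℂ ψ x := by
          simp [Submodule.starProjection_eq_self_iff.mpr hψ]
  have hPadj : LinearMap.adjoint P = P := by
    refine ((LinearMap.eq_adjoint_iff P P).mpr ?_).symm
    intro x y
    rw [hP]
    simpa using Submodule.inner_starProjection_left_eq_right K x y
  have houter : P ∘ₗ outer ψ ∘ₗ P = outer ψ := by
    ext x
    simp [outer, map_smul, hPψ, hinner]
  have hsq : ∀ k, ((Real.sqrt (lam k) : ℂ))⁻¹ * (lam k : ℂ) = (Real.sqrt (lam k) : ℂ) := by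
    intro k
    have h0 : Real.sqrt (lam k) ≠ 0 := ne_of_gt (Real.sqrt_pos.mpr (hlam k))
    have h1 : (lam k : ℝ) = Real.sqrt (lam k) * Real.sqrt (lam k) :=
      (Real.mul_self_sqrt (hlam k).le).symm
    rw [h1, Real.sqrt_mul_self (Real.sqrt_nonneg _)]
    push_cast
    field_simp
  have hT : ∀ k k', R k ∘ₗ E k' ∘ₗ P
      = if k = k' then (Real.sqrt (lam k) : ℂ) • P else 0 := by
    intro k k'
    rw [hR]
    have h2 : (((Real.sqrt (lam k) : ℂ))⁻¹ • (P ∘ₗ LinearMap.adjoint (E k))) ∘ₗ E k' ∘ₗ P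
        = ((Real.sqrt (lam k) : ℂ))⁻¹ • (P ∘ₗ LinearMap.adjoint (E k) ∘ₗ E k' ∘ₗ P) := by
      simp [LinearMap.smul_comp, LinearMap.comp_assoc]
    rw [h2, hKL]
    split_ifs
    · rw [smul_smul, hsq]
    · simp
  have hterm : ∀ k k',
      R k ∘ₗ E k' ∘ₗ outer ψ ∘ₗ LinearMap.adjoint (E k') ∘ₗ LinearMap.adjoint (R k)
        = if k = k' then (lam k : ℂ) • outer ψ else 0 := by
    intro k k'
    have h1 : R k ∘ₗ E k' ∘ₗ outer ψ ∘ₗ LinearMap.adjoint (E k') ∘ₗ LinearMap.adjoint (R k)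
        = (R k ∘ₗ E k' ∘ₗ P) ∘ₗ outer ψ ∘ₗ LinearMap.adjoint (R k ∘ₗ E k' ∘ₗ P) := by
      rw [LinearMap.adjoint_comp, LinearMap.adjoint_comp, hPadj]
      conv_lhs => rw [← houter]
      simp only [LinearMap.comp_assoc]
    rw [h1, hT]
    split_ifs with h
    · subst h
      have hadj : LinearMap.adjoint ((Real.sqrt (lam k) : ℂ) • P)
          = (Real.sqrt (lam k) : ℂ) • P := by
        rw [map_smulₛₗ LinearMap.adjoint, hPadj, Complex.conj_ofReal]
      rw [hadj]
      have : ((Real.sqrt (lam k) : ℂ) • P) ∘ₗ outer ψ ∘ₗ ((Real.sqrt (lam k) : ℂ) • P)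
          = ((Real.sqrt (lam k) : ℂ) * (Real.sqrt (lam k) : ℂ)) • (P ∘ₗ outer ψ ∘ₗ P) := by
        simp [LinearMap.smul_comp, LinearMap.comp_smul, smul_smul]
        norm_cast
      rw [this, houter, ← Complex.ofReal_mul, Real.mul_self_sqrt (hlam k).le]
    · simp
  have hsum : ∀ k, ∑ k',
      R k ∘ₗ E k' ∘ₗ outer ψ ∘ₗ LinearMap.adjoint (E k') ∘ₗ LinearMap.adjoint (R k)
        = (lam k : ℂ) • outer ψ := by
    intro k
    rw [Finset.sum_congr rfl (fun k' _ => hterm k k')]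
    simp
  constructor
  · simp only [hterm, if_pos]
    rw [← Finset.sum_smul]
    norm_cast
  · rw [Finset.sum_congr rfl (fun k _ => hsum k)]
    rw [← Finset.sum_smul]
    norm_cast
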